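/- arXiv:1409.6709 — 5 statements merged into one kernel-verified Lean document; each statement's English description precedes it below -/
import Mathlib

section
/- Let Γ be a simple graph with vertex set X and let Y ⊆ X. The subgroup of the right-angled Artin group A(Γ) generated by the images of the vertices in Y is isomorphic to the right-angled Artin group A(Γ[Y]) of the induced subgraph on Y. In particular, the canonical homomorphism A(Γ[Y]) → A(Γ) is injective. -/
/-- The defining relations of the right-angled Artin group of a simple graph:
one commutator for each edge. -/
def raagRels {X : Type} (Γ : SimpleGraph X) : Set (FreeGroup X) :=
  {r | ∃ x y : X, Γ.Adj x y ∧
    r = FreeGroup.of x * FreeGroup.of y * (FreeGroup.of x)⁻¹ * (FreeGroup.of y)⁻¹}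

/-- The right-angled Artin group (partially commutative group) of a simple graph. -/
abbrev RAAG {X : Type} (Γ : SimpleGraph X) : Type := PresentedGroup (raagRels Γ)

lemma raag_rel_one {X : Type} (Γ : SimpleGraph X) {x y : X} (h : Γ.Adj x y) :
    (PresentedGroup.of x : RAAG Γ) * PresentedGroup.of y *
      (PresentedGroup.of x)⁻¹ * (PresentedGroup.of y)⁻¹ = 1 := by
  have hmem : (FreeGroup.of x * FreeGroup.of y * (FreeGroup.of x)⁻¹ * (FreeGroup.of y)⁻¹)
      ∈ Subgroup.normalClosure (raagRels Γ) :=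
    Subgroup.subset_normalClosure ⟨x, y, h, rfl⟩
  have : (QuotientGroup.mk (FreeGroup.of x * FreeGroup.of y * (FreeGroup.of x)⁻¹ *
      (FreeGroup.of y)⁻¹) : RAAG Γ) = 1 := (QuotientGroup.eq_one_iff _).mpr hmem
  exact this

/-- For a subset `Y` of the vertices, the canonical homomorphism
`A(Γ[Y]) → A(Γ)` (sending each generator `y ∈ Y` to itself) is injective,
and the subgroup of `A(Γ)` generated by the images of the vertices in `Y`
is isomorphic to `A(Γ[Y])`. -/
theorem stmt3 {X : Type} (Γ : SimpleGraph X) (Y : Set X)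
    (α : RAAG (Γ.induce Y) →* RAAG Γ)
    (hα : ∀ y : Y, α (PresentedGroup.of y) = PresentedGroup.of (y : X)) :
    Function.Injective α ∧
      Nonempty ((Subgroup.closure ((fun x : X => (PresentedGroup.of x : RAAG Γ)) '' Y))
        ≃* RAAG (Γ.induce Y)) := by
  classical
  -- the retraction `f : X → RAAG (Γ.induce Y)`
  set f : X → RAAG (Γ.induce Y) :=
    fun x => if h : x ∈ Y then PresentedGroup.of (⟨x, h⟩ : Y) else 1 with hf
  have hrels : ∀ r ∈ raagRels Γ, FreeGroup.lift f r = 1 := by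
    rintro r ⟨x, y, hxy, rfl⟩
    simp only [map_mul, map_inv, FreeGroup.lift_apply_of]
    by_cases hx : x ∈ Y
    · by_cases hy : y ∈ Y
      · have hadj : (Γ.induce Y).Adj ⟨x, hx⟩ ⟨y, hy⟩ := hxy
        simpa [hf, hx, hy] using raag_rel_one (Γ.induce Y) hadj
      · simp [hf, hy]
    · simp [hf, hx]
  let β : RAAG Γ →* RAAG (Γ.induce Y) := PresentedGroup.toGroup hrels
  have hβα : β.comp α = MonoidHom.id _ := by
    ext y
    have : β (PresentedGroup.of (y : X)) = PresentedGroup.of y := by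
      show PresentedGroup.toGroup hrels (PresentedGroup.of (y : X)) = _
      rw [PresentedGroup.toGroup.of]
      simp [hf, y.2]
    simp [hα y, this]
  have hinj : Function.Injective α := by
    intro a b hab
    have := congrArg β hab
    have h1 : β (α a) = a := by rw [← MonoidHom.comp_apply, hβα]; rfl
    have h2 : β (α b) = b := by rw [← MonoidHom.comp_apply, hβα]; rfl
    rw [h1, h2] at this; exact this
  refine ⟨hinj, ?_⟩
  have hrange : α.range =
      Subgroup.closure ((fun x : X => (PresentedGroup.of x : RAAG Γ)) '' Y) := by
    rw [MonoidHom.range_eq_map, ← PresentedGroup.closure_range_of (raagRels (Γ.induce Y)),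
      MonoidHom.map_closure]
    congr 1
    ext g
    constructor
    · rintro ⟨_, ⟨y, rfl⟩, rfl⟩
      exact ⟨y, y.2, (hα y).symm⟩
    · rintro ⟨x, hx, rfl⟩
      exact ⟨PresentedGroup.of ⟨x, hx⟩, ⟨⟨x, hx⟩, rfl⟩, hα ⟨x, hx⟩⟩
  exact ⟨(MulEquiv.subgroupCongr hrange.symm).trans (MonoidHom.ofInjective hinj).symm⟩
end

section
/- The group ℤ × F₂ does not satisfy the Howson property: there exist finitely generated subgroups H and K of ℤ × F₂ whose intersection H ∩ K is not finitely generated. -/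
open Finsupp SemidirectProduct Multiplicative Subgroup

private abbrev A := ℤ →₀ ℤ

private noncomputable def phi : Multiplicative ℤ →* MulAut (Multiplicative A) :=
  MonoidHom.mk' (fun z => AddEquiv.toMultiplicative (Finsupp.domCongr (Equiv.addRight z.toAdd)))
    (by
      intro a b
      ext x : 1
      show ofAdd (equivMapDomain (Equiv.addRight (toAdd (a * b))) x.toAdd)
        = ofAdd (equivMapDomain (Equiv.addRight (toAdd a))
            (equivMapDomain (Equiv.addRight (toAdd b)) x.toAdd))
      rw [← equivMapDomain_trans]
      congr 1
      congr 1
      ext k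
      simp only [Equiv.trans_apply, Equiv.coe_addRight, toAdd_mul]
      ring)

private lemma phi_apply (z : Multiplicative ℤ) (x : Multiplicative A) :
    phi z x = ofAdd (equivMapDomain (Equiv.addRight z.toAdd) x.toAdd) := rfl

private abbrev G := Multiplicative A ⋊[phi] Multiplicative ℤ

private noncomputable def f : FreeGroup (Fin 2) →* G :=
  FreeGroup.lift fun i => if i = 0 then inr (ofAdd 1) else inl (ofAdd (single 0 1))

private def sig : FreeGroup (Fin 2) →* Multiplicative ℤ :=
  FreeGroup.lift fun i => if i = 0 then ofAdd 1 else 1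

private lemma rightHom_comp_f : (rightHom).comp f = sig := by
  apply FreeGroup.ext_hom
  intro i
  fin_cases i <;> simp [f, sig]

private lemma sig_conj (M : ℤ) :
    sig ((FreeGroup.of 0) ^ M * FreeGroup.of 1 * (FreeGroup.of 0) ^ (-M)) = 1 := by
  simp only [map_mul, map_zpow, sig, FreeGroup.lift_apply_of, if_pos rfl]
  simp

private lemma f_conj (M : ℤ) :
    f ((FreeGroup.of 0) ^ M * FreeGroup.of 1 * (FreeGroup.of 0) ^ (-M))
      = inl (ofAdd (single M 1)) := by
  have h0 : f (FreeGroup.of 0) = inr (ofAdd 1) := by simp [f]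
  have h1 : f (FreeGroup.of 1) = inl (ofAdd (single 0 1)) := by simp [f]
  have hz : (inr (ofAdd (1:ℤ)) : G) ^ M = inr (ofAdd M) := by
    rw [← map_zpow]
    congr 1
    simp [← ofAdd_zsmul]
  have hz' : (inr (ofAdd (1:ℤ)) : G) ^ (-M) = (inr ((ofAdd M)⁻¹) : G) := by
    rw [map_inv, ← hz, zpow_neg]
  rw [map_mul, map_mul, map_zpow, map_zpow, h0, h1, hz, hz', ← inl_aut]
  congr 1
  rw [phi_apply]
  congr 1
  show equivMapDomain (Equiv.addRight M) (single 0 1) = single M 1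
  rw [equivMapDomain_single]
  congr 1
  simp



private noncomputable def GT (T : Finset ℤ) : Subgroup G where
  carrier := {g | g.right = 1 ∧ ∀ n ∉ T, toAdd g.left n = 0}
  one_mem' := by
    constructor
    · rfl
    · intro n _
      show toAdd (1 : Multiplicative A) n = 0
      simp
  mul_mem' := by
    rintro a b ⟨ha1, ha2⟩ ⟨hb1, hb2⟩
    constructor
    · show (a * b).right = 1
      rw [mul_right, ha1, hb1, mul_one]
    · intro n hn
      have : (a * b).left = a.left * b.left := by
        rw [mul_left, ha1, map_one, MulAut.one_apply]
      rw [this]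
      show toAdd (a.left * b.left) n = 0
      rw [toAdd_mul]
      show a.left.toAdd n + b.left.toAdd n = 0
      rw [ha2 n hn, hb2 n hn, add_zero]
  inv_mem' := by
    rintro a ⟨ha1, ha2⟩
    constructor
    · show a⁻¹.right = 1
      rw [inv_right, ha1, inv_one]
    · intro n hn
      have : a⁻¹.left = a.left⁻¹ := by
        rw [inv_left, ha1, inv_one, map_one, MulAut.one_apply]
      rw [this]
      show toAdd a.left⁻¹ n = 0
      rw [toAdd_inv]
      show -(a.left.toAdd) n = 0
      rw [ha2 n hn, neg_zero]

/-- `ℤ × F₂` does not satisfy the Howson property: it has two finitely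
generated subgroups whose intersection is not finitely generated. -/
theorem stmt5 :
    ∃ H K : Subgroup (Multiplicative ℤ × FreeGroup (Fin 2)),
      H.FG ∧ K.FG ∧ ¬ (H ⊓ K).FG := by
  classical
  set a : FreeGroup (Fin 2) := FreeGroup.of 0 with ha
  set b : FreeGroup (Fin 2) := FreeGroup.of 1 with hb
  set t : Multiplicative ℤ := ofAdd 1 with ht
  refine ⟨closure {(t, a), (1, b)}, closure {(1, a), (1, b)}, ⟨{(t, a), (1, b)}, by simp⟩,
    ⟨{(1, a), (1, b)}, by simp⟩, ?_⟩
  set H : Subgroup (Multiplicative ℤ × FreeGroup (Fin 2)) := closure {(t, a), (1, b)} with hH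
  set K : Subgroup (Multiplicative ℤ × FreeGroup (Fin 2)) := closure {(1, a), (1, b)} with hK
  set m : Multiplicative ℤ × FreeGroup (Fin 2) →* G :=
    f.comp (MonoidHom.snd _ _) with hm
  -- membership facts
  have hsig : ∀ p ∈ H ⊓ K, p.1 = 1 ∧ sig p.2 = 1 := by
    intro p hp
    obtain ⟨hpH, hpK⟩ := hp
    have hKfst : K ≤ (MonoidHom.fst (Multiplicative ℤ) (FreeGroup (Fin 2))).ker := by
      rw [hK]
      apply closure_le _ |>.mpr
      rintro x hx
      simp only [Set.mem_insert_iff, Set.mem_singleton_iff] at hx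
      rcases hx with rfl | rfl <;> exact MonoidHom.mem_ker.mpr rfl
    have h1 : p.1 = 1 := hKfst hpK
    have hchi : H ≤ ((sig.comp (MonoidHom.snd _ _)) *
        (MonoidHom.fst (Multiplicative ℤ) (FreeGroup (Fin 2)))⁻¹).ker := by
      rw [hH]
      apply closure_le _ |>.mpr
      rintro x hx
      simp only [Set.mem_insert_iff, Set.mem_singleton_iff] at hx
      rcases hx with rfl | rfl <;>
        simp [MonoidHom.mem_ker, sig, ht, ha, hb]
    have h2 := hchi hpH
    rw [MonoidHom.mem_ker] at h2
    simp only [MonoidHom.mul_apply, MonoidHom.inv_apply, MonoidHom.coe_comp,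
      MonoidHom.coe_snd, MonoidHom.coe_fst, Function.comp_apply] at h2
    rw [h1, inv_one, mul_one] at h2
    exact ⟨h1, h2⟩
  -- K contains 1 × everything
  have hKall : ∀ w : FreeGroup (Fin 2), ((1 : Multiplicative ℤ), w) ∈ K := by
    intro w
    have : (⊤ : Subgroup (FreeGroup (Fin 2))) ≤
        K.comap (MonoidHom.inr (Multiplicative ℤ) (FreeGroup (Fin 2))) := by
      rw [← FreeGroup.closure_range_of (Fin 2)]
      apply closure_le _ |>.mpr
      rintro x ⟨i, rfl⟩
      fin_cases i
      · exact subset_closure (Set.mem_insert _ _)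
      · exact subset_closure (Set.mem_insert_of_mem _ rfl)
    exact this (mem_top w)
  intro hFG
  obtain ⟨S, hSc, hSfin⟩ := (Subgroup.fg_iff _).mp hFG
  set T : Finset ℤ := hSfin.toFinset.biUnion fun p => (toAdd (m p).left).support with hT
  obtain ⟨M, hM⟩ := Infinite.exists_notMem_finset T
  -- H ⊓ K ≤ comap of GT T
  have hle : H ⊓ K ≤ (GT T).comap m := by
    rw [← hSc]
    apply closure_le _ |>.mpr
    intro p hp
    have hpJ : p ∈ H ⊓ K := hSc ▸ subset_closure hp
    obtain ⟨_, hs⟩ := hsig p hpJ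
    have hr : (m p).right = 1 := by
      have h := DFunLike.congr_fun rightHom_comp_f p.2
      have : (m p).right = rightHom (f p.2) := rfl
      rw [this, show rightHom (f p.2) = (rightHom.comp f) p.2 from rfl, h, hs]
    refine ⟨hr, ?_⟩
    intro n hn
    have hp' : p ∈ hSfin.toFinset := hSfin.mem_toFinset.mpr hp
    have hns : n ∉ (toAdd (m p).left).support := fun hc =>
      hn (Finset.mem_biUnion.mpr ⟨p, hp', hc⟩)
    exact Finsupp.notMem_support_iff.mp hns
  -- the element (1, a^M b a^{-M})
  have hmemH : ((1 : Multiplicative ℤ), a ^ M * b * a ^ (-M)) ∈ H := by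
    have g1 : ((t, a) : Multiplicative ℤ × FreeGroup (Fin 2)) ∈ H :=
      subset_closure (Set.mem_insert _ _)
    have g2 : ((1, b) : Multiplicative ℤ × FreeGroup (Fin 2)) ∈ H :=
      subset_closure (Set.mem_insert_of_mem _ rfl)
    have := H.mul_mem (H.mul_mem (H.zpow_mem g1 M) g2) (H.zpow_mem g1 (-M))
    have heq : ((t, a) : Multiplicative ℤ × FreeGroup (Fin 2)) ^ M * (1, b) * (t, a) ^ (-M)
        = ((1 : Multiplicative ℤ), a ^ M * b * a ^ (-M)) := by
      ext
      · show t ^ M * 1 * t ^ (-M) = 1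
        rw [mul_one, zpow_neg, mul_inv_cancel]
      · rfl
    rwa [heq] at this
  have hmemK : ((1 : Multiplicative ℤ), a ^ M * b * a ^ (-M)) ∈ K := hKall _
  have hmem := hle ⟨hmemH, hmemK⟩
  rw [Subgroup.mem_comap] at hmem
  obtain ⟨-, h2⟩ := hmem
  have hfc : m ((1 : Multiplicative ℤ), a ^ M * b * a ^ (-M)) = inl (ofAdd (single M 1)) := by
    show f (a ^ M * b * a ^ (-M)) = inl (ofAdd (single M 1))
    rw [ha, hb]
    exact f_conj M
  have := h2 M hM
  rw [hfc, left_inl, toAdd_ofAdd] at this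
  simp at this
end

section
/- In G = ℤ × F₂ with ℤ = ⟨t⟩ and F₂ free on a, b, let H = ⟨(0,a), (0,b)⟩ and K = ⟨(t,a), (0,b)⟩. Then H ∩ K = {(0, w) : w ∈ F₂, the total exponent of a in w is 0}. -/
/-- In `G = ℤ × F₂` with `ℤ = ⟨t⟩` and `F₂` free on `a`, `b`, let
`H = ⟨(1,a),(1,b)⟩` and `K = ⟨(t,a),(1,b)⟩` (multiplicative notation).
Then `H ⊓ K` consists exactly of the elements `(1, w)` where the total
exponent of `a` in `w` is `0`. -/
theorem stmt6 :
    let t : Multiplicative ℤ := Multiplicative.ofAdd 1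
    let a : FreeGroup (Fin 2) := FreeGroup.of 0
    let b : FreeGroup (Fin 2) := FreeGroup.of 1
    let expA : FreeGroup (Fin 2) →* Multiplicative ℤ :=
      FreeGroup.lift (fun i => if i = 0 then Multiplicative.ofAdd (1 : ℤ) else 1)
    let H : Subgroup (Multiplicative ℤ × FreeGroup (Fin 2)) :=
      Subgroup.closure {(1, a), (1, b)}
    let K : Subgroup (Multiplicative ℤ × FreeGroup (Fin 2)) :=
      Subgroup.closure {(t, a), (1, b)}
    ∀ p : Multiplicative ℤ × FreeGroup (Fin 2),
      p ∈ H ⊓ K ↔ p.1 = 1 ∧ expA p.2 = 1 := by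
  intro t a b expA H K p
  have hexpa : expA a = t := by simp [expA, a, t]
  have hexpb : expA b = 1 := by simp [expA, b]
  have htop : ∀ w : FreeGroup (Fin 2), w ∈ Subgroup.closure ({a, b} : Set (FreeGroup (Fin 2))) := by
    intro w
    have : ({a, b} : Set (FreeGroup (Fin 2))) = Set.range FreeGroup.of := by
      ext x
      constructor
      · rintro (rfl | rfl)
        exacts [⟨0, rfl⟩, ⟨1, rfl⟩]
      · rintro ⟨i, rfl⟩
        fin_cases i
        · exact Or.inl rfl
        · exact Or.inr rfl
    rw [this, FreeGroup.closure_range_of]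
    trivial
  constructor
  · rintro ⟨hH, hK⟩
    have h1 : p.1 = 1 ∧ p.2 ∈ Subgroup.closure ({a, b} : Set (FreeGroup (Fin 2))) := by
      refine Subgroup.closure_induction (fun x hx => ?_) ?_ ?_ ?_ hH
      · rcases hx with rfl | rfl
        · exact ⟨rfl, Subgroup.subset_closure (Or.inl rfl)⟩
        · exact ⟨rfl, Subgroup.subset_closure (Or.inr rfl)⟩
      · exact ⟨rfl, one_mem _⟩
      · rintro x y _ _ ⟨hx1, hx2⟩ ⟨hy1, hy2⟩
        exact ⟨by simp [Prod.fst_mul, hx1, hy1], mul_mem hx2 hy2⟩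
      · rintro x _ ⟨hx1, hx2⟩
        exact ⟨by simp [Prod.fst_inv, hx1], inv_mem hx2⟩
    have h2 : p.1 = expA p.2 := by
      refine Subgroup.closure_induction (fun x hx => ?_) ?_ ?_ ?_ hK
      · rcases hx with rfl | rfl
        · simp [hexpa]
        · simp [hexpb]
      · simp
      · intro x y _ _ hx hy
        simp [Prod.fst_mul, Prod.snd_mul, hx, hy]
      · intro x _ hx
        simp [Prod.fst_inv, Prod.snd_inv, hx]
    exact ⟨h1.1, by rw [← h2, h1.1]⟩
  · rintro ⟨h1, h2⟩
    have hmemH : ∀ w : FreeGroup (Fin 2), ((1 : Multiplicative ℤ), w) ∈ H := by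
      intro w
      refine Subgroup.closure_induction (fun x hx => ?_) ?_ ?_ ?_ (htop w)
      · rcases hx with rfl | rfl
        · exact Subgroup.subset_closure (Or.inl rfl)
        · exact Subgroup.subset_closure (Or.inr rfl)
      · exact one_mem _
      · intro x y _ _ hx hy
        have := mul_mem hx hy
        simpa using this
      · intro x _ hx
        have := inv_mem hx
        simpa using this
    have hmemK : ∀ w : FreeGroup (Fin 2), ((expA w, w) : Multiplicative ℤ × FreeGroup (Fin 2)) ∈ K := by
      intro w
      refine Subgroup.closure_induction (fun x hx => ?_) ?_ ?_ ?_ (htop w)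
      · rcases hx with rfl | rfl
        · rw [hexpa]; exact Subgroup.subset_closure (Or.inl rfl)
        · rw [hexpb]; exact Subgroup.subset_closure (Or.inr rfl)
      · rw [map_one]; exact one_mem K
      · intro x y _ _ hx hy
        have := mul_mem hx hy
        simpa using this
      · intro x _ hx
        have := inv_mem hx
        simpa using this
    have hp : p = (1, p.2) := by rw [← h1]
    constructor
    · rw [hp]; exact hmemH p.2
    · rw [hp]
      have := hmemK p.2
      rwa [h2] at this
end

section
/- The free product of two fully residually free groups is fully residually free. -/
open Monoid

/-- A group `G` is fully residually free if for every finite subset `S ⊆ G`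
with `1 ∉ S` there is a homomorphism `φ` from `G` to some free group with
`φ s ≠ 1` for all `s ∈ S`. -/
def FullyResiduallyFree (G : Type) [Group G] : Prop :=
  ∀ S : Finset G, (1 : G) ∉ S →
    ∃ (ι : Type) (φ : G →* FreeGroup ι), ∀ s ∈ S, φ s ≠ 1

section Aux

variable {ι : Type} {M N : ι → Type} [∀ i, Group (M i)] [∀ i, Group (N i)]

/-- Push a reduced word through a family of homomorphisms that do not kill its letters. -/
def CoprodIWordMap (ψ : ∀ i, M i →* N i) (w : CoprodI.Word M)
    (hψ : ∀ l ∈ w.toList, ψ l.1 l.2 ≠ 1) : CoprodI.Word N where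
  toList := w.toList.map fun l => ⟨l.1, ψ l.1 l.2⟩
  ne_one := by
    intro l hl
    rw [List.mem_map] at hl
    obtain ⟨a, ha, rfl⟩ := hl
    exact hψ a ha
  chain_ne := by
    refine List.isChain_map_of_isChain _ ?_ w.chain_ne
    intro a b h
    exact h

theorem lift_word_prod_ne_one (ψ : ∀ i, M i →* N i) (w : CoprodI.Word M)
    (hw : w ≠ CoprodI.Word.empty) (hψ : ∀ l ∈ w.toList, ψ l.1 l.2 ≠ 1) :
    CoprodI.lift (fun i => (CoprodI.of (M := N)).comp (ψ i)) w.prod ≠ 1 := by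
  classical
  set Φ := CoprodI.lift (fun i => (CoprodI.of (M := N)).comp (ψ i)) with hΦ
  have key : Φ w.prod = (CoprodIWordMap ψ w hψ).prod := by
    rw [CoprodI.Word.prod, map_list_prod, CoprodI.Word.prod]
    simp [CoprodIWordMap, List.map_map, Function.comp_def, Φ]
  rw [key]
  intro h1
  have hinj : Function.Injective (CoprodI.Word.prod (M := N)) :=
    fun a b hab => (CoprodI.Word.equiv (M := N)).symm.injective (a₁ := a) (a₂ := b) hab
  have heq : (CoprodIWordMap ψ w hψ) = CoprodI.Word.empty := by
    apply hinj
    rw [h1, CoprodI.Word.prod_empty]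
  have hnil : w.toList.map (fun l => (⟨l.1, ψ l.1 l.2⟩ : Σ i, N i)) = [] := by
    have := congrArg CoprodI.Word.toList heq
    simpa [CoprodIWordMap] using this
  apply hw
  ext1
  simpa using List.map_eq_nil_iff.mp hnil

end Aux

section Bridge

variable {G H : Type} [Group G] [Group H]

/-- The `Bool`-indexed family for the binary coproduct. -/
def BFam (G H : Type) : Bool → Type := fun b => cond b G H

instance : ∀ b, Group (BFam G H b) := fun b => by
  cases b
  · exact ‹Group H›
  · exact ‹Group G›

def toI : Coprod G H →* CoprodI (BFam G H) :=
  Coprod.lift (CoprodI.of (M := BFam G H) (i := true)) (CoprodI.of (M := BFam G H) (i := false))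

def fromI : CoprodI (BFam G H) →* Coprod G H :=
  CoprodI.lift fun b => b.rec (motive := fun b => BFam G H b →* Coprod G H) Coprod.inr Coprod.inl

theorem toI_injective : Function.Injective (toI (G := G) (H := H)) := by
  have key : (fromI (G := G) (H := H)).comp toI = MonoidHom.id _ := by
    apply Coprod.hom_ext <;> ext x
    · show fromI (toI (Coprod.inl x)) = Coprod.inl x
      rw [toI]; refine (congrArg fromI (Coprod.lift_apply_inl (CoprodI.of (M := BFam G H) (i := true)) (CoprodI.of (M := BFam G H) (i := false)) x)).trans ?_; rw [fromI]
      exact CoprodI.lift_of (M := BFam G H) _ (i := true) x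
    · show fromI (toI (Coprod.inr x)) = Coprod.inr x
      rw [toI]; refine (congrArg fromI (Coprod.lift_apply_inr (CoprodI.of (M := BFam G H) (i := true)) (CoprodI.of (M := BFam G H) (i := false)) x)).trans ?_; rw [fromI]
      exact CoprodI.lift_of (M := BFam G H) _ (i := false) x
  intro a b hab
  have ha := DFunLike.congr_fun key a
  have hb := DFunLike.congr_fun key b
  simp only [MonoidHom.comp_apply, MonoidHom.id_apply] at ha hb
  rw [← ha, ← hb, hab]

/-- The `G`-letters of a word. -/
def glist : List (Σ b, BFam G H b) → List G
  | [] => []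
  | ⟨true, x⟩ :: t => x :: glist t
  | ⟨false, _⟩ :: t => glist t

/-- The `H`-letters of a word. -/
def hlist : List (Σ b, BFam G H b) → List H
  | [] => []
  | ⟨true, _⟩ :: t => hlist t
  | ⟨false, x⟩ :: t => x :: hlist t

theorem mem_glist (x : G) : ∀ l : List (Σ b, BFam G H b),
    x ∈ glist l ↔ (⟨true, x⟩ : Σ b, BFam G H b) ∈ l
  | [] => by simp [glist]
  | ⟨true, y⟩ :: t => by
    simp only [glist]
    refine ((List.mem_cons (a := x) (b := (y : G)) (l := glist t)).trans (or_congr Iff.rfl (mem_glist x t))).trans ?_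
    refine Iff.trans ?_ List.mem_cons.symm
    constructor
    · rintro (rfl | h)
      · exact Or.inl rfl
      · exact Or.inr h
    · rintro (h | h)
      · left
        have := (Sigma.mk.inj_iff.mp h).2
        exact eq_of_heq this
      · exact Or.inr h
  | ⟨false, y⟩ :: t => by
    simp only [glist, mem_glist x t, List.mem_cons]
    constructor
    · exact Or.inr
    · rintro (h | h)
      · exact absurd (Sigma.mk.inj_iff.mp h).1 (by simp)
      · exact h

theorem mem_hlist (x : H) : ∀ l : List (Σ b, BFam G H b),
    x ∈ hlist l ↔ (⟨false, x⟩ : Σ b, BFam G H b) ∈ l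
  | [] => by simp [hlist]
  | ⟨false, y⟩ :: t => by
    simp only [hlist]
    refine ((List.mem_cons (a := x) (b := (y : H)) (l := hlist t)).trans (or_congr Iff.rfl (mem_hlist x t))).trans ?_
    refine Iff.trans ?_ List.mem_cons.symm
    constructor
    · rintro (rfl | h)
      · exact Or.inl rfl
      · exact Or.inr h
    · rintro (h | h)
      · left
        have := (Sigma.mk.inj_iff.mp h).2
        exact eq_of_heq this
      · exact Or.inr h
  | ⟨true, y⟩ :: t => by
    simp only [hlist, mem_hlist x t, List.mem_cons]
    constructor
    · exact Or.inr
    · rintro (h | h)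
      · exact absurd (Sigma.mk.inj_iff.mp h).1 (by simp)
      · exact h

end Bridge

/-- The free product (coproduct) of two fully residually free groups is
fully residually free. -/
theorem stmt12 {G H : Type} [Group G] [Group H]
    (hG : FullyResiduallyFree G) (hH : FullyResiduallyFree H) :
    FullyResiduallyFree (Monoid.Coprod G H) := by
  classical
  intro S hS
  set wof : Coprod G H → CoprodI.Word (BFam G H) :=
    fun s => CoprodI.Word.equiv (toI s) with hwof
  have hprod : ∀ s, (wof s).prod = toI s := fun s =>
    (CoprodI.Word.equiv (M := BFam G H)).symm_apply_apply (toI s)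
  set SG : Finset G := S.biUnion (fun s => (glist (wof s).toList).toFinset) with hSG
  set SH : Finset H := S.biUnion (fun s => (hlist (wof s).toList).toFinset) with hSH
  have h1G : (1 : G) ∉ SG := by
    rw [hSG]
    simp only [Finset.mem_biUnion, List.mem_toFinset, not_exists]
    rintro s ⟨hs, h1⟩
    exact (wof s).ne_one _ ((mem_glist 1 _).mp h1) rfl
  have h1H : (1 : H) ∉ SH := by
    rw [hSH]
    simp only [Finset.mem_biUnion, List.mem_toFinset, not_exists]
    rintro s ⟨hs, h1⟩
    exact (wof s).ne_one _ ((mem_hlist 1 _).mp h1) rfl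
  obtain ⟨ι1, φG, hφG⟩ := hG SG h1G
  obtain ⟨ι2, φH, hφH⟩ := hH SH h1H
  set I : Bool → Type := fun b => cond b ι1 ι2 with hI
  set ψ : ∀ b, BFam G H b →* FreeGroup (I b) :=
    fun b => b.rec (motive := fun b => BFam G H b →* FreeGroup (I b)) φH φG with hψ
  set Φ : CoprodI (BFam G H) →* CoprodI (fun b => FreeGroup (I b)) :=
    CoprodI.lift (fun b => (CoprodI.of (M := fun b => FreeGroup (I b))).comp (ψ b)) with hΦ
  set B : FreeGroupBasis (Σ b, I b) (CoprodI (fun b => FreeGroup (I b))) :=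
    CoprodI.FreeGroupBasis.coprodI (fun b => FreeGroupBasis.ofFreeGroup (I b)) with hB
  refine ⟨Σ b, I b, B.repr.toMonoidHom.comp (Φ.comp toI), ?_⟩
  intro s hs
  simp only [MonoidHom.comp_apply, MulEquiv.coe_toMonoidHom, ne_eq]
  rw [← map_one B.repr, B.repr.injective.eq_iff]
  have hne : toI s ≠ 1 := by
    intro h
    apply hS
    have : s = 1 := toI_injective (by rw [h, map_one])
    rwa [this] at hs
  have hwne : wof s ≠ CoprodI.Word.empty := by
    intro h
    apply hne
    rw [← hprod s, h, CoprodI.Word.prod_empty]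
  have hletters : ∀ l ∈ (wof s).toList, ψ l.1 l.2 ≠ 1 := by
    rintro ⟨b, x⟩ hl
    cases b
    · apply hφH
      rw [hSH]
      simp only [Finset.mem_biUnion, List.mem_toFinset]
      exact Finset.mem_biUnion.mpr ⟨s, hs, List.mem_toFinset.mpr ((mem_hlist x _).mpr hl)⟩
    · apply hφG
      rw [hSG]
      simp only [Finset.mem_biUnion, List.mem_toFinset]
      exact Finset.mem_biUnion.mpr ⟨s, hs, List.mem_toFinset.mpr ((mem_glist x _).mpr hl)⟩
  have := lift_word_prod_ne_one ψ (wof s) hwne hletters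
  rw [hprod] at this
  exact this
end

section
/- If a group G contains ℤ × F₂ as a subgroup, then G does not satisfy the Howson property. -/
namespace Stmt13Aux

abbrev B := ℤ →₀ ZMod 2
abbrev F2 := FreeGroup (Fin 2)

lemma single_self (k : ℤ) : (Finsupp.single k 1 : B) + Finsupp.single k 1 = 0 := by
  rw [← Finsupp.single_add]
  have h : (1 + 1 : ZMod 2) = 0 := rfl
  rw [h, Finsupp.single_zero]

/-- shift permutation -/
def A : Equiv.Perm (B × ℤ) := Equiv.prodCongr (Equiv.refl B) (Equiv.addRight (1:ℤ))

/-- lamp toggle permutation -/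
noncomputable def Bp : Equiv.Perm (B × ℤ) where
  toFun p := (p.1 + Finsupp.single p.2 1, p.2)
  invFun p := (p.1 + Finsupp.single p.2 1, p.2)
  left_inv p := by
    rw [Prod.ext_iff]
    refine ⟨?_, rfl⟩
    show p.1 + Finsupp.single p.2 1 + Finsupp.single p.2 1 = p.1
    rw [add_assoc, single_self, add_zero]
  right_inv p := by
    rw [Prod.ext_iff]
    refine ⟨?_, rfl⟩
    show p.1 + Finsupp.single p.2 1 + Finsupp.single p.2 1 = p.1
    rw [add_assoc, single_self, add_zero]

noncomputable def ψ : F2 →* Equiv.Perm (B × ℤ) :=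
  FreeGroup.lift (fun i => if i = 0 then A else Bp)

def φ : F2 →* Multiplicative ℤ :=
  FreeGroup.lift (fun i => if i = 0 then Multiplicative.ofAdd (1:ℤ) else 1)

lemma ψ_a : ψ (FreeGroup.of (0 : Fin 2)) = A := by simp [ψ]
lemma ψ_b : ψ (FreeGroup.of (1 : Fin 2)) = Bp := by simp [ψ]
lemma φ_a : φ (FreeGroup.of (0 : Fin 2)) = Multiplicative.ofAdd (1:ℤ) := by simp [φ]
lemma φ_b : φ (FreeGroup.of (1 : Fin 2)) = 1 := by simp [φ]

lemma A_apply (f : B) (k : ℤ) : A (f, k) = (f, k + 1) := rfl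
lemma A_inv_apply (f : B) (k : ℤ) : A⁻¹ (f, k) = (f, k - 1) := rfl
lemma Bp_apply (f : B) (k : ℤ) : Bp (f, k) = (f + Finsupp.single k 1, k) := rfl
lemma Bp_inv : Bp⁻¹ = Bp := rfl

theorem key (w : F2) : ∀ k : ℤ, ∃ c : B, ∀ f : B,
    ψ w (f, k) = (f + c, k + Multiplicative.toAdd (φ w)) := by
  induction w using FreeGroup.induction_on with
  | C1 => intro k; exact ⟨0, fun f => by simp⟩
  | of i =>
      intro k
      fin_cases i
      · refine ⟨0, fun f => ?_⟩
        show (ψ (FreeGroup.of (0:Fin 2))) (f, k)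
            = (f + 0, k + Multiplicative.toAdd (φ (FreeGroup.of (0:Fin 2))))
        rw [ψ_a, φ_a, A_apply]
        simp
      · refine ⟨Finsupp.single k 1, fun f => ?_⟩
        show (ψ (FreeGroup.of (1:Fin 2))) (f, k)
            = (f + Finsupp.single k 1, k + Multiplicative.toAdd (φ (FreeGroup.of (1:Fin 2))))
        rw [ψ_b, φ_b, Bp_apply]
        simp
  | inv_of i _ =>
      intro k
      fin_cases i
      · refine ⟨0, fun f => ?_⟩
        show (ψ ((FreeGroup.of (0:Fin 2))⁻¹)) (f, k)
            = (f + 0, k + Multiplicative.toAdd (φ ((FreeGroup.of (0:Fin 2))⁻¹)))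
        rw [map_inv, map_inv, ψ_a, φ_a, A_inv_apply]
        simp [sub_eq_add_neg]
      · refine ⟨Finsupp.single k 1, fun f => ?_⟩
        show (ψ ((FreeGroup.of (1:Fin 2))⁻¹)) (f, k)
            = (f + Finsupp.single k 1, k + Multiplicative.toAdd (φ ((FreeGroup.of (1:Fin 2))⁻¹)))
        rw [map_inv, map_inv, ψ_b, φ_b, Bp_inv, Bp_apply]
        simp
  | mul u v hu hv =>
      intro k
      obtain ⟨cv, hcv⟩ := hv k
      obtain ⟨cu, hcu⟩ := hu (k + Multiplicative.toAdd (φ v))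
      refine ⟨cv + cu, fun f => ?_⟩
      have h1 : ψ (u * v) (f, k) = ψ u (ψ v (f, k)) := by
        rw [map_mul]; rfl
      rw [h1, hcv, hcu, Prod.ext_iff]
      constructor
      · show f + cv + cu = f + (cv + cu)
        rw [add_assoc]
      · show k + Multiplicative.toAdd (φ v) + Multiplicative.toAdd (φ u)
            = k + Multiplicative.toAdd (φ (u * v))
        rw [map_mul, toAdd_mul]
        ring

noncomputable def c (w : F2) : B := (ψ w (0, 0)).1

lemma psi_zero (w : F2) (f : B) :
    ψ w (f, 0) = (f + c w, Multiplicative.toAdd (φ w)) := by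
  obtain ⟨c', hc'⟩ := key w 0
  have h0 := hc' 0
  have : c w = c' := by
    unfold c
    rw [h0]
    simp
  rw [this, hc' f, zero_add]

lemma c_one : c 1 = 0 := by
  unfold c
  simp

lemma c_mul (u v : F2) (hv : φ v = 1) : c (u * v) = c u + c v := by
  have h1 : ψ v (0, 0) = (c v, 0) := by
    rw [psi_zero, hv, zero_add]
    rfl
  have h3 : ψ (u * v) (0, 0) = (c v + c u, Multiplicative.toAdd (φ u)) := by
    rw [map_mul, Equiv.Perm.mul_apply, h1]
    exact psi_zero u (c v)
  show (ψ (u * v) (0, 0)).1 = c u + c v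
  rw [h3]
  exact add_comm _ _

lemma c_inv (w : F2) (hw : φ w = 1) : c w⁻¹ = -(c w) := by
  have h1 : φ w⁻¹ = 1 := by rw [map_inv, hw, inv_one]
  have h2 : c (w * w⁻¹) = c w + c w⁻¹ := c_mul w w⁻¹ h1
  rw [mul_inv_cancel, c_one] at h2
  exact eq_neg_of_add_eq_zero_right h2.symm

/-- the witness elements aⁿ b a⁻ⁿ -/
def x (n : ℕ) : F2 :=
  (FreeGroup.of 0) ^ n * (FreeGroup.of 1 * ((FreeGroup.of 0)⁻¹) ^ n)

lemma φ_x (n : ℕ) : φ (x n) = 1 := by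
  unfold x
  rw [map_mul, map_mul, map_pow, map_pow, map_inv, φ_a, φ_b]
  rw [one_mul, ← mul_pow, mul_inv_cancel, one_pow]

lemma A_pow (n : ℕ) (f : B) (k : ℤ) : (A ^ n) (f, k) = (f, k + n) := by
  induction n generalizing k with
  | zero => simp
  | succ m ih =>
      rw [pow_succ, Equiv.Perm.mul_apply, A_apply, ih]
      rw [Prod.mk.injEq]
      refine ⟨rfl, ?_⟩
      push_cast
      ring

lemma A_inv_pow (n : ℕ) (f : B) (k : ℤ) : (A⁻¹ ^ n) (f, k) = (f, k - n) := by
  induction n generalizing k with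
  | zero => simp
  | succ m ih =>
      rw [pow_succ, Equiv.Perm.mul_apply, A_inv_apply, ih]
      rw [Prod.mk.injEq]
      refine ⟨rfl, ?_⟩
      push_cast
      ring

lemma c_x (n : ℕ) : c (x n) = Finsupp.single (-(n:ℤ)) 1 := by
  unfold c x
  rw [map_mul, map_mul, map_pow, map_pow, map_inv, ψ_a, ψ_b]
  rw [Equiv.Perm.mul_apply, Equiv.Perm.mul_apply, A_inv_pow, Bp_apply, A_pow]
  simp

theorem ker_not_fg : ¬ (φ.ker).FG := by
  rintro ⟨S, hS⟩
  classical
  set U : Finset ℤ := S.biUnion (fun s => (c s).support) with hU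
  set T : Subgroup F2 :=
    { carrier := {w | w ∈ φ.ker ∧ ((c w).support : Set ℤ) ⊆ (U : Set ℤ)}
      one_mem' := by
        refine ⟨one_mem _, ?_⟩
        rw [c_one]
        simp
      mul_mem' := by
        rintro u v ⟨hu1, hu2⟩ ⟨hv1, hv2⟩
        refine ⟨mul_mem hu1 hv1, ?_⟩
        rw [c_mul u v hv1]
        refine subset_trans ?_ (Set.union_subset hu2 hv2)
        exact_mod_cast Finsupp.support_add
      inv_mem' := by
        rintro u ⟨hu1, hu2⟩
        refine ⟨inv_mem hu1, ?_⟩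
        rw [c_inv u hu1, Finsupp.support_neg]
        exact hu2 } with hT
  have hST : (S : Set F2) ⊆ T := by
    intro s hs
    refine ⟨?_, ?_⟩
    · rw [← hS]; exact Subgroup.subset_closure hs
    · intro z hz
      exact Finset.mem_coe.2 (Finset.mem_biUnion.2 ⟨s, hs, Finset.mem_coe.1 hz⟩)
  have hle : φ.ker ≤ T := by
    rw [← hS]
    exact (Subgroup.closure_le T).2 hST
  set n : ℕ := U.sup (fun z => z.natAbs) + 1 with hn
  have hxk : x n ∈ φ.ker := φ_x n
  obtain ⟨_, hsup⟩ := hle hxk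
  rw [c_x n] at hsup
  have hmem : (-(n:ℤ)) ∈ (Finsupp.single (-(n:ℤ)) (1 : ZMod 2)).support := by
    rw [Finsupp.support_single_ne_zero _ one_ne_zero]
    simp
  have hUmem := hsup hmem
  have : (-(n:ℤ)).natAbs ≤ U.sup (fun z => z.natAbs) :=
    Finset.le_sup (by exact_mod_cast hUmem)
  simp [hn] at this
  omega

lemma range_fg {G : Type} [Group G] (γ : F2 →* G) : γ.range.FG := by
  have h1 : γ = FreeGroup.lift (fun i => γ (FreeGroup.of i)) := by
    apply FreeGroup.ext_hom
    intro a
    simp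
  rw [Subgroup.fg_iff]
  refine ⟨Set.range (fun i => γ (FreeGroup.of i)), ?_, Set.finite_range _⟩
  rw [← FreeGroup.range_lift_eq_closure]
  exact (congrArg MonoidHom.range h1).symm

end Stmt13Aux


/-- A group satisfies the Howson property if the intersection of any two
finitely generated subgroups is finitely generated. -/
def Howson (G : Type) [Group G] : Prop :=
  ∀ H K : Subgroup G, H.FG → K.FG → (H ⊓ K).FG

/-- If a group contains `ℤ × F₂` as a subgroup (i.e. `ℤ × F₂` embeds in it),
then it does not satisfy the Howson property. -/
theorem stmt13 {G : Type} [Group G]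
    (f : Multiplicative ℤ × FreeGroup (Fin 2) →* G) (hf : Function.Injective f) :
    ¬ Howson G := by
  intro how
  classical
  set h : Stmt13Aux.F2 →* Multiplicative ℤ × FreeGroup (Fin 2) :=
    MonoidHom.inr _ _ with hh
  set g : Stmt13Aux.F2 →* Multiplicative ℤ × FreeGroup (Fin 2) :=
    Stmt13Aux.φ.prod (MonoidHom.id _) with hg
  set β := f.comp h with hβdef
  set α := f.comp g with hαdef
  have hinr : Function.Injective h := fun u v huv => congrArg Prod.snd huv
  have hβ : Function.Injective β := hf.comp hinr
  have hint := how β.range α.range (Stmt13Aux.range_fg β) (Stmt13Aux.range_fg α)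
  have heq : β.range ⊓ α.range = Subgroup.map β Stmt13Aux.φ.ker := by
    ext z
    constructor
    · rintro ⟨⟨u, hu⟩, ⟨v, hv⟩⟩
      have huv : h u = g v := hf (hu.trans hv.symm)
      have h2 : ((1 : Multiplicative ℤ), u) = (Stmt13Aux.φ v, v) := huv
      have h3 : u = v := (Prod.ext_iff.1 h2).2
      have h4 : Stmt13Aux.φ u = 1 := by
        rw [h3]
        exact ((Prod.ext_iff.1 h2).1).symm
      exact ⟨u, h4, hu⟩
    · rintro ⟨w, hw1, hw2⟩
      refine ⟨⟨w, hw2⟩, ⟨w, ?_⟩⟩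
      have : g w = h w := by
        have : Stmt13Aux.φ w = 1 := hw1
        simp [hg, hh, MonoidHom.prod_apply, this]
      rw [hαdef, MonoidHom.comp_apply, this, ← MonoidHom.comp_apply, ← hβdef, hw2]
  rw [heq] at hint
  apply Stmt13Aux.ker_not_fg
  rw [Subgroup.fg_iff_submonoid_fg]
  apply Submonoid.FG.map_injective β hβ
  exact (Subgroup.fg_iff_submonoid_fg _).1 hint
end
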